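/- Let K be a complete nonarchimedean field and Q, H ∈ K{{T}} entire power series (i.e. converging on all of K) with Q a polynomial of degree n with invertible leading coefficient and constant term 1. If the resultant Res(Q̃, H) is nonzero, where Q̃ is the monic normalization of the reversed polynomial, then Q and H generate the unit ideal in K{{T}}: there exist entire series f, g with fQ + gH = 1. -/

import Mathlib

open PowerSeries Filter Topology

/-- A power series is entire if its coefficients `c_n` satisfy `‖c_n‖ r^n → 0` for every
radius `r`, i.e. it converges on all of `ℂ_p`. -/
def IsEntirePS {K : Type*} [NormedField K] (f : PowerSeries K) : Prop :=
  ∀ r : ℝ, 0 < r → Tendsto (fun n => ‖PowerSeries.coeff (R := K) n f‖ * r ^ n) atTop (𝓝 0)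

section Aux

variable {K : Type*} [NormedField K]

lemma tendsto_zero_of_le' {f : ℕ → ℝ} (h0 : ∀ n, 0 ≤ f n)
    (h : ∀ ε : ℝ, 0 < ε → ∀ᶠ n in atTop, f n ≤ ε) : Tendsto f atTop (𝓝 0) := by
  rw [NormedAddCommGroup.tendsto_nhds_zero]
  intro ε hε
  filter_upwards [h (ε/2) (by positivity)] with n hn
  rw [Real.norm_eq_abs, abs_of_nonneg (h0 n)]
  linarith

lemma isEntirePS_of_eventually {f : PowerSeries K}
    (h : ∀ᶠ n in atTop, PowerSeries.coeff (R := K) n f = 0) : IsEntirePS f := by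
  intro r hr
  apply Tendsto.congr' _ tendsto_const_nhds
  filter_upwards [h] with n hn
  simp [hn]

lemma isEntirePS_coe (p : Polynomial K) : IsEntirePS (p : PowerSeries K) := by
  apply isEntirePS_of_eventually
  filter_upwards [eventually_gt_atTop p.natDegree] with n hn
  rw [Polynomial.coeff_coe]
  exact Polynomial.coeff_eq_zero_of_natDegree_lt hn

lemma IsEntirePS.add {f g : PowerSeries K} (hf : IsEntirePS f) (hg : IsEntirePS g) :
    IsEntirePS (f + g) := by
  intro r hr
  apply squeeze_zero (fun n => by positivity)
    (g := fun n => ‖PowerSeries.coeff (R := K) n f‖ * r ^ n + ‖PowerSeries.coeff (R := K) n g‖ * r ^ n)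
  · intro n
    rw [map_add, ← add_mul]
    exact mul_le_mul_of_nonneg_right (norm_add_le _ _) (by positivity)
  · simpa using (hf r hr).add (hg r hr)

lemma IsEntirePS.neg {f : PowerSeries K} (hf : IsEntirePS f) : IsEntirePS (-f) := by
  intro r hr
  simpa using hf r hr

lemma IsEntirePS.sub {f g : PowerSeries K} (hf : IsEntirePS f) (hg : IsEntirePS g) :
    IsEntirePS (f - g) := by
  rw [sub_eq_add_neg]; exact hf.add hg.neg

lemma IsEntirePS.mul [IsUltrametricDist K] {f g : PowerSeries K}
    (hf : IsEntirePS f) (hg : IsEntirePS g) : IsEntirePS (f * g) := by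
  intro r hr
  apply tendsto_zero_of_le' (fun n => by positivity)
  intro ε hε
  obtain ⟨Mf, hMf⟩ := (hf r hr).bddAbove_range
  obtain ⟨Mg, hMg⟩ := (hg r hr).bddAbove_range
  set M : ℝ := max Mf (max Mg 1) with hM
  have hM1 : (1:ℝ) ≤ M := le_max_of_le_right (le_max_right _ _)
  have hM0 : (0:ℝ) < M := lt_of_lt_of_le one_pos hM1
  have hbf : ∀ n, ‖PowerSeries.coeff (R := K) n f‖ * r ^ n ≤ M :=
    fun n => le_trans (hMf ⟨n, rfl⟩) (le_max_left _ _)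
  have hbg : ∀ n, ‖PowerSeries.coeff (R := K) n g‖ * r ^ n ≤ M :=
    fun n => le_trans (hMg ⟨n, rfl⟩) (le_max_of_le_right (le_max_left _ _))
  have hεM : 0 < ε / M := by positivity
  obtain ⟨Nf, hNf⟩ := (((hf r hr).eventually_le_const hεM)).exists_forall_of_atTop
  obtain ⟨Ng, hNg⟩ := (((hg r hr).eventually_le_const hεM)).exists_forall_of_atTop
  filter_upwards [eventually_ge_atTop (Nf + Ng)] with n hn
  have hrn : (0:ℝ) < r ^ n := by positivity
  rw [← le_div_iff₀ hrn, PowerSeries.coeff_mul]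
  apply IsUltrametricDist.norm_sum_le_of_forall_le_of_nonneg (by positivity)
  rintro ⟨i, j⟩ hij
  rw [Finset.HasAntidiagonal.mem_antidiagonal] at hij
  have key : ‖PowerSeries.coeff (R := K) i f‖ * r ^ i * (‖PowerSeries.coeff (R := K) j g‖ * r ^ j) ≤ ε := by
    rcases le_or_gt Nf i with hi | hi
    · calc ‖PowerSeries.coeff (R := K) i f‖ * r ^ i * (‖PowerSeries.coeff (R := K) j g‖ * r ^ j)
          ≤ (ε / M) * M := mul_le_mul (hNf i hi) (hbg j) (by positivity) hεM.le
        _ = ε := div_mul_cancel₀ ε hM0.ne'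
    · have hj : Ng ≤ j := by omega
      calc ‖PowerSeries.coeff (R := K) i f‖ * r ^ i * (‖PowerSeries.coeff (R := K) j g‖ * r ^ j)
          ≤ M * (ε / M) := mul_le_mul (hbf i) (hNg j hj) (by positivity) hM0.le
        _ = ε := mul_div_cancel₀ ε hM0.ne'
  rw [le_div_iff₀ hrn]
  calc ‖PowerSeries.coeff (R := K) i f * PowerSeries.coeff (R := K) j g‖ * r ^ n
      = ‖PowerSeries.coeff (R := K) i f‖ * r ^ i * (‖PowerSeries.coeff (R := K) j g‖ * r ^ j) := by
        rw [norm_mul, ← hij, pow_add]; ring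
    _ ≤ ε := key

lemma isEntirePS_one : IsEntirePS (1 : PowerSeries K) := by
  simpa using isEntirePS_coe (1 : Polynomial K)

lemma isEntirePS_CC (c : K) : IsEntirePS (PowerSeries.C (R := K) c) := by
  simpa using isEntirePS_coe (Polynomial.C c)

variable [CompleteSpace K] [IsUltrametricDist K]

lemma summable_tail {F : PowerSeries K} (hF : IsEntirePS F) {α : K} (hα : α ≠ 0) (n : ℕ) :
    Summable fun k => PowerSeries.coeff (R := K) (n + k) F * α ^ k := by
  apply NonarchimedeanAddGroup.summable_of_tendsto_cofinite_zero
  rw [Nat.cofinite_eq_atTop, tendsto_zero_iff_norm_tendsto_zero]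
  have hα' : (0:ℝ) < ‖α‖ := norm_pos_iff.mpr hα
  have h1 := ((hF ‖α‖ hα').comp (tendsto_add_atTop_nat n)).div_const (‖α‖ ^ n)
  rw [zero_div] at h1
  apply h1.congr
  intro k
  simp only [Function.comp_apply]
  rw [norm_mul, norm_pow, add_comm k n, pow_add]
  field_simp

/-- Division of an entire series by a linear factor vanishing at one of its zeros. -/
lemma exists_div_linear {F : PowerSeries K} (hF : IsEntirePS F) {α : K} (hα : α ≠ 0)
    (h0 : (∑' n : ℕ, PowerSeries.coeff (R := K) n F * α ^ n) = 0) :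
    ∃ G : PowerSeries K, IsEntirePS G ∧
      (PowerSeries.X - PowerSeries.C (R := K) α) * G = F := by
  set S : ℕ → K := fun n => ∑' k : ℕ, PowerSeries.coeff (R := K) (n + k) F * α ^ k with hSdef
  have hS0 : S 0 = 0 := by
    rw [hSdef]; simpa using h0
  have hrec : ∀ n, S n = PowerSeries.coeff (R := K) n F + α * S (n + 1) := by
    intro n
    have hs := summable_tail hF hα n
    rw [hSdef]
    simp only
    rw [Summable.tsum_eq_zero_add hs]
    have hc : ∀ k : ℕ, PowerSeries.coeff (R := K) (n + (k + 1)) F * α ^ (k + 1)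
        = α * (PowerSeries.coeff (R := K) ((n + 1) + k) F * α ^ k) := by
      intro k
      rw [show n + (k + 1) = (n + 1) + k by omega, pow_succ]
      ring
    rw [tsum_congr hc, tsum_mul_left]
    simp
  refine ⟨PowerSeries.mk fun n => S (n + 1), ?_, ?_⟩
  · intro r hr
    apply tendsto_zero_of_le' (fun n => by positivity)
    intro ε hε
    set s : ℝ := max r ‖α‖ with hs
    have hs0 : (0:ℝ) < s := lt_max_of_lt_left hr
    have hεs : (0:ℝ) < ε * s := by positivity
    obtain ⟨N, hN⟩ := ((hF s hs0).eventually_le_const hεs).exists_forall_of_atTop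
    filter_upwards [eventually_ge_atTop N] with n hn
    have hrn : (0:ℝ) < r ^ n := by positivity
    rw [PowerSeries.coeff_mk, ← le_div_iff₀ hrn]
    apply IsUltrametricDist.norm_tsum_le_of_forall_le_of_nonneg (by positivity)
    intro k
    rw [le_div_iff₀ hrn]
    have hterm : ‖PowerSeries.coeff (R := K) (n + 1 + k) F * α ^ k‖ * r ^ n
        ≤ (‖PowerSeries.coeff (R := K) (n + 1 + k) F‖ * s ^ (n + 1 + k)) / s := by
      rw [norm_mul, norm_pow]
      rw [le_div_iff₀ hs0]
      calc ‖PowerSeries.coeff (R := K) (n + 1 + k) F‖ * ‖α‖ ^ k * r ^ n * s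
          ≤ ‖PowerSeries.coeff (R := K) (n + 1 + k) F‖ * s ^ k * s ^ n * s := by
            have h1 : ‖α‖ ^ k ≤ s ^ k := pow_le_pow_left₀ (norm_nonneg _) (le_max_right _ _) k
            have h2 : r ^ n ≤ s ^ n := pow_le_pow_left₀ hr.le (le_max_left _ _) n
            have := norm_nonneg (PowerSeries.coeff (R := K) (n + 1 + k) F)
            apply mul_le_mul_of_nonneg_right _ hs0.le
            apply mul_le_mul (mul_le_mul_of_nonneg_left h1 this) h2 (by positivity) (by positivity)
        _ = ‖PowerSeries.coeff (R := K) (n + 1 + k) F‖ * s ^ (n + 1 + k) := by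
            rw [pow_add, pow_add, pow_one]; ring
    refine hterm.trans ?_
    rw [div_le_iff₀ hs0]
    calc ‖PowerSeries.coeff (R := K) (n + 1 + k) F‖ * s ^ (n + 1 + k) ≤ ε * s := hN _ (by omega)
      _ ≤ ε * s := le_refl _
  · ext m
    rw [sub_mul, map_sub]
    cases m with
    | zero =>
        rw [PowerSeries.coeff_zero_X_mul]
        have h1 : (PowerSeries.coeff (R := K) 0) ((PowerSeries.C (R := K) α) * PowerSeries.mk fun n => S (n + 1))
            = α * S 1 := by
          rw [PowerSeries.coeff_zero_eq_constantCoeff, map_mul]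
          simp [PowerSeries.coeff_zero_eq_constantCoeff.symm]
        rw [h1]
        have h2 := hrec 0
        rw [hS0] at h2
        linear_combination h2
    | succ k =>
        rw [PowerSeries.coeff_succ_X_mul, PowerSeries.coeff_mk]
        have h1 : (PowerSeries.coeff (R := K) (k+1))
            ((PowerSeries.C (R := K) α) * PowerSeries.mk fun n => S (n + 1)) = α * S (k + 2) := by
          rw [PowerSeries.coeff_C_mul, PowerSeries.coeff_mk]
        rw [h1]
        linear_combination hrec (k + 1)

/-- The case of a linear factor `X - α` with `H(α) ≠ 0`. -/
lemma linear_case {H : PowerSeries K} (hH : IsEntirePS H) {α : K} (hα : α ≠ 0)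
    (hval : (∑' n : ℕ, PowerSeries.coeff (R := K) n H * α ^ n) ≠ 0) :
    ∃ f g : PowerSeries K, IsEntirePS f ∧ IsEntirePS g ∧
      f * (PowerSeries.X - PowerSeries.C (R := K) α) + g * H = 1 := by
  set v : K := ∑' n : ℕ, PowerSeries.coeff (R := K) n H * α ^ n with hv
  set g : PowerSeries K := PowerSeries.C (R := K) v⁻¹ with hg
  set F : PowerSeries K := 1 - g * H with hF
  have hFent : IsEntirePS F := (isEntirePS_one).sub ((isEntirePS_CC _).mul hH)
  have hsum : Summable fun n : ℕ => PowerSeries.coeff (R := K) n H * α ^ n := by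
    simpa using summable_tail hH hα 0
  have hF0 : (∑' n : ℕ, PowerSeries.coeff (R := K) n F * α ^ n) = 0 := by
    have hc : ∀ n : ℕ, PowerSeries.coeff (R := K) n F * α ^ n
        = (if n = 0 then (1:K) else 0) - v⁻¹ * (PowerSeries.coeff (R := K) n H * α ^ n) := by
      intro n
      rw [hF, map_sub, hg, PowerSeries.coeff_C_mul, PowerSeries.coeff_one]
      split_ifs with h
      · subst h; ring
      · ring
    rw [tsum_congr hc, Summable.tsum_sub ?_ (hsum.mul_left _)]
    · rw [tsum_mul_left, ← hv, inv_mul_cancel₀ hval]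
      rw [tsum_eq_single 0 (by intro b hb; simp [hb])]
      simp
    · apply summable_of_finite_support
      apply Set.Finite.subset (Set.finite_singleton 0)
      intro n hn
      simp only [Function.mem_support] at hn
      by_contra h
      simp only [Set.mem_singleton_iff] at h
      exact hn (by simp [h])
  obtain ⟨G, hGent, hGeq⟩ := exists_div_linear hFent hα hF0
  exact ⟨G, g, hGent, isEntirePS_CC _, by rw [mul_comm G, hGeq, hF]; ring⟩

variable [IsAlgClosed K]

lemma main_aux : ∀ N : ℕ, ∀ Q : Polynomial K, Q.natDegree ≤ N → Q.coeff 0 ≠ 0 →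
    ∀ H : PowerSeries K, IsEntirePS H →
    (∀ α : K, Q.IsRoot α → (∑' n : ℕ, PowerSeries.coeff (R := K) n H * α ^ n) ≠ 0) →
    ∃ f g : PowerSeries K, IsEntirePS f ∧ IsEntirePS g ∧
      f * (Q : PowerSeries K) + g * H = 1 := by
  intro N
  induction N with
  | zero =>
      intro Q hdeg h0 H hH hroots
      have : Q = Polynomial.C (Q.coeff 0) :=
        Polynomial.eq_C_of_natDegree_eq_zero (le_antisymm hdeg (Nat.zero_le _))
      refine ⟨PowerSeries.C (R := K) (Q.coeff 0)⁻¹, 0, isEntirePS_CC _, isEntirePS_coe 0, ?_⟩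
      rw [this, Polynomial.coeff_C_zero, Polynomial.coe_C, zero_mul, add_zero, ← map_mul,
        inv_mul_cancel₀ h0, map_one]
  | succ N ih =>
      intro Q hdeg h0 H hH hroots
      rcases le_or_gt Q.natDegree N with hle | hgt
      · exact ih Q hle h0 H hH hroots
      have hQne : Q ≠ 0 := fun h => h0 (by simp [h])
      have hdegQ : Q.natDegree = N + 1 := le_antisymm hdeg hgt
      have hdeg0 : Q.degree ≠ 0 := by
        rw [Polynomial.degree_eq_natDegree hQne, hdegQ]
        exact_mod_cast Nat.succ_ne_zero N
      obtain ⟨α, hαroot⟩ := IsAlgClosed.exists_root Q hdeg0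
      have hαroot' : Q.IsRoot α := hαroot
      have hα : α ≠ 0 := by
        rintro rfl
        exact h0 (by rwa [Polynomial.coeff_zero_eq_eval_zero])
      obtain ⟨Q₁, hQfact⟩ := (Polynomial.dvd_iff_isRoot.mpr hαroot')
      have hQ₁ne : Q₁ ≠ 0 := by
        rintro rfl
        rw [mul_zero] at hQfact
        exact hQne hQfact
      have hQ₁deg : Q₁.natDegree ≤ N := by
        have := Polynomial.natDegree_mul (Polynomial.X_sub_C_ne_zero α) hQ₁ne
        rw [← hQfact, Polynomial.natDegree_X_sub_C, hdegQ] at this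
        omega
      have hQ₁0 : Q₁.coeff 0 ≠ 0 := by
        intro h
        apply h0
        rw [hQfact, Polynomial.mul_coeff_zero, h, mul_zero]
      have hQ₁roots : ∀ β : K, Q₁.IsRoot β →
          (∑' n : ℕ, PowerSeries.coeff (R := K) n H * β ^ n) ≠ 0 := by
        intro β hβ
        apply hroots
        rw [Polynomial.IsRoot, hQfact, Polynomial.eval_mul, hβ.eq_zero, mul_zero]
      obtain ⟨f₁, g₁, hf₁, hg₁, e₁⟩ := ih Q₁ hQ₁deg hQ₁0 H hH hQ₁roots
      obtain ⟨f₂, g₂, hf₂, hg₂, e₂⟩ := linear_case hH hα (hroots α hαroot')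
      have hLcoe : ((Polynomial.X - Polynomial.C α : Polynomial K) : PowerSeries K)
          = PowerSeries.X - PowerSeries.C (R := K) α := by
        rw [Polynomial.coe_sub, Polynomial.coe_X, Polynomial.coe_C]
      have hLent : IsEntirePS (PowerSeries.X - PowerSeries.C (R := K) α) := by
        rw [← hLcoe]; exact isEntirePS_coe _
      refine ⟨f₁ * f₂,
        f₁ * (Q₁ : PowerSeries K) * g₂ + g₁ * f₂ * (PowerSeries.X - PowerSeries.C (R := K) α)
          + g₁ * g₂ * H,
        hf₁.mul hf₂, ?_, ?_⟩
      · have h1 : IsEntirePS (f₁ * (Q₁ : PowerSeries K)) := hf₁.mul (isEntirePS_coe Q₁)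
        exact ((h1.mul hg₂).add ((hg₁.mul hf₂).mul hLent)).add ((hg₁.mul hg₂).mul hH)
      · rw [hQfact, Polynomial.coe_mul, hLcoe]
        linear_combination (f₂ * (PowerSeries.X - PowerSeries.C (R := K) α) + g₂ * H) * e₁ + e₂

end Aux

/-- Let `K` be a complete nonarchimedean (algebraically closed) field
and let `Q ∈ K[T]` be a polynomial with constant term `1` (hence invertible leading
coefficient) and `H ∈ K{{T}}` an entire power series.  If `Q` and `H` have no common
root, i.e. `H(α) ≠ 0` for every root `α` of `Q` (the simplified form of the
nonvanishing of the resultant `Res(Q̃, H)`), then `Q` and `H` generate the unit ideal in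
the ring `K{{T}}` of entire series: there are entire `f, g` with `fQ + gH = 1`. -/
theorem stmt_15 {K : Type*} [NormedField K] [CompleteSpace K] [IsUltrametricDist K]
    [IsAlgClosed K]
    (Q : Polynomial K) (hQ0 : Q.coeff 0 = 1)
    (H : PowerSeries K) (hH : IsEntirePS H)
    (hnocommon : ∀ α : K, Q.IsRoot α →
      (∑' n : ℕ, PowerSeries.coeff (R := K) n H * α ^ n) ≠ 0) :
    ∃ f g : PowerSeries K, IsEntirePS f ∧ IsEntirePS g ∧
      f * (Q : PowerSeries K) + g * H = 1 :=
  main_aux Q.natDegree Q le_rfl (by rw [hQ0]; exact one_ne_zero) H hH hnocommon
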